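/- Let F be a field and G, F₀ ∈ M_{m×n}(F). There exists a square-zero matrix H ∈ M_m(F) with G = H·F₀ if and only if N(F₀) ⊆ N(G) and R(G) ∩ R(F₀) ⊆ F₀(N(G)), where F₀(N(G)) denotes the image of the kernel of G under the linear map v ↦ F₀v. -/

import Mathlib

/-- Relative complement: over a field, any submodule `p ≤ q` has a complement inside `q`. -/
private lemma exists_relative_compl {F V : Type*} [Field F] [AddCommGroup V] [Module F V]
    {p q : Submodule F V} (h : p ≤ q) :
    ∃ r : Submodule F V, r ≤ q ∧ p ⊓ r = ⊥ ∧ p ⊔ r = q := by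
  obtain ⟨r', hr'⟩ := Submodule.exists_isCompl (p.comap q.subtype)
  refine ⟨r'.map q.subtype, Submodule.map_subtype_le _ _, ?_, ?_⟩
  · rw [eq_bot_iff]
    intro x hx
    rw [Submodule.mem_inf] at hx
    obtain ⟨hxp, hxr⟩ := hx
    obtain ⟨y, hy, rfl⟩ := Submodule.mem_map.mp hxr
    have hmem : y ∈ (p.comap q.subtype) ⊓ r' := ⟨hxp, hy⟩
    rw [hr'.inf_eq_bot] at hmem
    simp only [Submodule.mem_bot] at hmem
    simp [hmem]
  · have hp : p = (p.comap q.subtype).map q.subtype := by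
      rw [Submodule.map_comap_subtype, inf_eq_right.mpr h]
    rw [hp, ← Submodule.map_sup, hr'.sup_eq_top, Submodule.map_subtype_top]

/-- A submodule disjoint from `S` extends to a complement of `S`. -/
private lemma exists_compl_ge {F V : Type*} [Field F] [AddCommGroup V] [Module F V]
    {S U : Submodule F V} (h : S ⊓ U = ⊥) :
    ∃ W : Submodule F V, U ≤ W ∧ IsCompl S W := by
  obtain ⟨W', hW'⟩ := Submodule.exists_isCompl (S ⊔ U)
  refine ⟨U ⊔ W', le_sup_left, ⟨?_, ?_⟩⟩
  · rw [Submodule.disjoint_def]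
    intro x hxS hx
    rw [Submodule.mem_sup] at hx
    obtain ⟨u, hu, w, hw, rfl⟩ := hx
    have hwSU : w ∈ S ⊔ U := by
      have hw2 : (u + w) - u ∈ S ⊔ U :=
        Submodule.sub_mem _ (Submodule.mem_sup_left hxS) (Submodule.mem_sup_right hu)
      simpa using hw2
    have hw0 : w = 0 := by
      have := hW'.disjoint.le_bot ⟨hwSU, hw⟩
      simpa using this
    subst hw0
    have : u + 0 ∈ S ⊓ U := ⟨hxS, by simpa using hu⟩
    rw [h] at this
    simpa using this
  · rw [codisjoint_iff, ← sup_assoc, hW'.sup_eq_top]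

/-- Botha, Theorem 1. Let `F` be a field and `G, F₀ ∈ M_{m×n}(F)`. There is
a square-zero matrix `H ∈ M_m(F)` with `G = H * F₀` if and only if `ker F₀ ⊆ ker G` and
`range G ∩ range F₀ ⊆ F₀(ker G)`. -/
theorem stmt7 {m n : ℕ} {F : Type*} [Field F]
    (G F₀ : Matrix (Fin m) (Fin n) F) :
    (∃ H : Matrix (Fin m) (Fin m) F, H * H = 0 ∧ G = H * F₀) ↔
      (LinearMap.ker F₀.mulVecLin ≤ LinearMap.ker G.mulVecLin ∧
       LinearMap.range G.mulVecLin ⊓ LinearMap.range F₀.mulVecLin ≤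
         Submodule.map F₀.mulVecLin (LinearMap.ker G.mulVecLin)) := by
  constructor
  · rintro ⟨H, hH2, rfl⟩
    constructor
    · intro v hv
      rw [LinearMap.mem_ker, Matrix.mulVecLin_apply] at hv ⊢
      rw [← Matrix.mulVec_mulVec, hv, Matrix.mulVec_zero]
    · rintro x ⟨hxG, hxF⟩
      obtain ⟨w, hw⟩ := hxF
      obtain ⟨u, hu⟩ := hxG
      refine ⟨w, ?_, hw⟩
      simp only [SetLike.mem_coe, LinearMap.mem_ker, Matrix.mulVecLin_apply] at hw hu ⊢
      rw [← Matrix.mulVec_mulVec, hw, ← hu, ← Matrix.mulVec_mulVec,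
        Matrix.mulVec_mulVec, hH2, Matrix.zero_mulVec]
  · rintro ⟨hker, hint⟩
    set f := F₀.mulVecLin with hf
    set g := G.mulVecLin with hg
    -- a linear section of the surjection onto the range of f
    obtain ⟨σ, hσ⟩ := f.rangeRestrict.exists_rightInverse_of_surjective
      f.range_rangeRestrict
    have hσ' : ∀ x : LinearMap.range f, f (σ x) = (x : Fin m → F) := by
      intro x
      have := congrArg (fun t => ((t x : LinearMap.range f) : Fin m → F)) hσ
      simpa using this
    set φ : LinearMap.range f →ₗ[F] (Fin m → F) := g.comp σ with hφ
    -- φ is the map "F₀ v ↦ G v" on the range of F₀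
    have hφ1 : ∀ v, φ ⟨f v, LinearMap.mem_range_self f v⟩ = g v := by
      intro v
      have h1 : f (σ ⟨f v, LinearMap.mem_range_self f v⟩) = f v :=
        hσ' ⟨f v, LinearMap.mem_range_self f v⟩
      have h2 : σ ⟨f v, LinearMap.mem_range_self f v⟩ - v ∈ LinearMap.ker f := by
        rw [LinearMap.mem_ker, map_sub, h1, sub_self]
      have h3 := hker h2
      rw [LinearMap.mem_ker, map_sub, sub_eq_zero] at h3
      simpa [hφ] using h3
    -- φ vanishes on range g ⊓ range f
    have hφ2 : ∀ x : LinearMap.range f, (x : Fin m → F) ∈ LinearMap.range g → φ x = 0 := by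
      intro x hx
      obtain ⟨w, hwker, hwx⟩ := hint ⟨hx, x.2⟩
      have h1 : f (σ x) = f w := by rw [hσ' x, hwx]
      have h2 : σ x - w ∈ LinearMap.ker f := by
        rw [LinearMap.mem_ker, map_sub, h1, sub_self]
      have h3 := hker h2
      rw [LinearMap.mem_ker, map_sub, sub_eq_zero] at h3
      simp only [SetLike.mem_coe, LinearMap.mem_ker] at hwker
      simp only [hφ, LinearMap.comp_apply]
      rw [h3, hwker]
    -- choose U : complement of (range g ⊓ range f) inside range g
    obtain ⟨U, hUle, hUdisj, hUsup⟩ :=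
      exists_relative_compl (inf_le_left : LinearMap.range g ⊓ LinearMap.range f ≤ _)
    -- U is disjoint from range f
    have hUS : LinearMap.range f ⊓ U = ⊥ := by
      rw [eq_bot_iff]
      rintro x ⟨hxf, hxU⟩
      have : x ∈ (LinearMap.range g ⊓ LinearMap.range f) ⊓ U := ⟨⟨hUle hxU, hxf⟩, hxU⟩
      rw [hUdisj] at this
      exact this
    -- extend U to a complement W of range f
    obtain ⟨W, hUW, hW⟩ := exists_compl_ge hUS
    set π := Submodule.linearProjOfIsCompl _ _ hW with hπ
    set Hlin : (Fin m → F) →ₗ[F] (Fin m → F) := φ.comp π with hHlin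
    -- Hlin ∘ f = g
    have hcomp : ∀ v, Hlin (f v) = g v := by
      intro v
      have : π (f v) = ⟨f v, LinearMap.mem_range_self f v⟩ :=
        Submodule.linearProjOfIsCompl_apply_left hW ⟨f v, LinearMap.mem_range_self f v⟩
      rw [hHlin, LinearMap.comp_apply, this, hφ1]
    -- Hlin vanishes on range g
    have hvanish : ∀ y ∈ LinearMap.range g, Hlin y = 0 := by
      intro y hy
      rw [← hUsup, Submodule.mem_sup] at hy
      obtain ⟨i, hi, u, hu, rfl⟩ := hy
      have hπi : π i = ⟨i, hi.2⟩ := Submodule.linearProjOfIsCompl_apply_left hW ⟨i, hi.2⟩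
      have hπu : π u = 0 := Submodule.projectionOnto_apply_of_mem_right hW (hUW hu)
      rw [hHlin, LinearMap.comp_apply, map_add, hπi, hπu, add_zero]
      exact hφ2 ⟨i, hi.2⟩ hi.1
    -- Hlin is square-zero
    have hsq : Hlin.comp Hlin = 0 := LinearMap.ext fun v => by
      have hmem : Hlin v ∈ LinearMap.range g := by
        rw [hHlin, LinearMap.comp_apply, hφ, LinearMap.comp_apply]
        exact LinearMap.mem_range_self g _
      simpa using hvanish _ hmem
    refine ⟨LinearMap.toMatrix' Hlin, ?_, ?_⟩
    · have : LinearMap.toMatrix' Hlin * LinearMap.toMatrix' Hlin =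
          LinearMap.toMatrix' (Hlin ∘ₗ Hlin) := (LinearMap.toMatrix'_comp Hlin Hlin).symm
      rw [this, hsq, map_zero]
    · apply Matrix.toLin'.injective
      rw [Matrix.toLin'_apply', Matrix.toLin'_apply', Matrix.mulVecLin_mul]
      have hmv : (LinearMap.toMatrix' Hlin).mulVecLin = Hlin := by
        rw [← Matrix.toLin'_apply', Matrix.toLin'_toMatrix']
      rw [hmv]
      exact LinearMap.ext fun v => by simpa [hf, hg] using (hcomp v).symm
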